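/- arXiv:1401.6385 — 3 statements merged into one kernel-verified Lean document; each statement's English description precedes it below -/
import Mathlib

section
/- Let T : ℕ → ℝ be a nonnegative function with T(0) = T(1) = T(2) = 1 satisfying T(m) ≤ T(m-3) + T(m-1) for all m ≥ 3. Then T(m) ≤ 1.466^m for all m. -/
theorem stmt_0 (T : ℕ → ℝ) (hnn : ∀ m, 0 ≤ T m)
    (h0 : T 0 = 1) (h1 : T 1 = 1) (h2 : T 2 = 1)
    (hrec : ∀ m, 3 ≤ m → T m ≤ T (m - 3) + T (m - 1)) :
    ∀ m, T m ≤ (1.466 : ℝ) ^ m := by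
  intro m
  induction m using Nat.strong_induction_on with
  | _ m ih =>
    match m with
    | 0 => simp [h0]
    | 1 => rw [h1]; norm_num
    | 2 => rw [h2]; nlinarith
    | (k+3) =>
      have h := hrec (k+3) (by omega)
      simp only [Nat.add_sub_cancel] at h
      have hk : T k ≤ (1.466:ℝ)^k := ih k (by omega)
      have hk2 : T (k+2) ≤ (1.466:ℝ)^(k+2) := ih (k+2) (by omega)
      have : (1.466:ℝ)^k + (1.466:ℝ)^(k+2) ≤ (1.466:ℝ)^(k+3) := by
        have hp : (0:ℝ) ≤ (1.466:ℝ)^k := by positivity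
        rw [pow_add, pow_add]
        nlinarith
      have h3 : k + 3 - 1 = k + 2 := by omega
      rw [h3] at h
      linarith
end

section
/- Let T : ℕ → ℝ be a nonnegative monotone function with T(m) = 1 for m ≤ 4, satisfying T(m) ≤ T(m-4) + T(m-5) + T(m-3) for all m ≥ 5. Then T(m) ≤ 1.325^m for all m. -/
theorem stmt_5 (T : ℕ → ℝ) (hnn : ∀ m, 0 ≤ T m) (hmono : Monotone T)
    (hbase : ∀ m, m ≤ 4 → T m = 1)
    (hrec : ∀ m, 5 ≤ m → T m ≤ T (m - 4) + T (m - 5) + T (m - 3)) :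
    ∀ m, T m ≤ (1.325 : ℝ) ^ m := by
  intro m
  induction m using Nat.strong_induction_on with
  | _ m ih =>
    by_cases h : m ≤ 4
    · rw [hbase m h]
      exact one_le_pow₀ (by norm_num)
    · push_neg at h
      have h5 : 5 ≤ m := h
      have i4 := ih (m - 4) (by omega)
      have i5 := ih (m - 5) (by omega)
      have i3 := ih (m - 3) (by omega)
      have hr := hrec m h5
      have key : (1.325 : ℝ) ^ (m - 4) + 1.325 ^ (m - 5) + 1.325 ^ (m - 3)
          ≤ 1.325 ^ m := by
        obtain ⟨n, rfl⟩ : ∃ n, m = n + 5 := ⟨m - 5, by omega⟩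
        have e4 : n + 5 - 4 = n + 1 := by omega
        have e5 : n + 5 - 5 = n := by omega
        have e3 : n + 5 - 3 = n + 2 := by omega
        rw [e4, e5, e3, pow_add, pow_add, pow_add]
        have hp : (0 : ℝ) ≤ 1.325 ^ n := by positivity
        nlinarith [hp]
      linarith
end

section
/- Let X be a finite set, F a finite family of subsets of X, and w : F → ℝ≥0. Suppose F = F₁ ∪ F₂ with F₁ ∩ F₂ = ∅ and (⋃ F₁) ∩ (⋃ F₂) = ∅. If F₁' is an optimal solution (maximum coverage, then minimum weight, among mutually exclusive sub-families) of the instance restricted to F₁, and F₂' is an optimal solution of the instance restricted to F₂, then F₁' ∪ F₂' is an optimal solution of the instance (X, F, w). -/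
/-- `F'` is an optimal solution of the weighted mutually exclusive maximum set cover
instance given by the family `F` and weight `w`. -/
def IsOptimal {α : Type*} [DecidableEq α] (w : Finset α → NNReal)
    (F F' : Finset (Finset α)) : Prop :=
  F' ⊆ F ∧ (∀ S ∈ F', ∀ T ∈ F', S ≠ T → Disjoint S T) ∧
    ∀ F'' ⊆ F, (∀ S ∈ F'', ∀ T ∈ F'', S ≠ T → Disjoint S T) →
      (F''.biUnion id).card ≤ (F'.biUnion id).card ∧
      ((F''.biUnion id).card = (F'.biUnion id).card →
        ∑ S ∈ F', w S ≤ ∑ S ∈ F'', w S)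

lemma biUnion_union_eq {α β : Type*} [DecidableEq α] [DecidableEq β]
    (s t : Finset α) (f : α → Finset β) :
    (s ∪ t).biUnion f = s.biUnion f ∪ t.biUnion f := by
  ext x
  simp only [Finset.mem_biUnion, Finset.mem_union]
  constructor
  · rintro ⟨a, ha | ha, hx⟩
    exacts [Or.inl ⟨a, ha, hx⟩, Or.inr ⟨a, ha, hx⟩]
  · rintro (⟨a, ha, hx⟩ | ⟨a, ha, hx⟩)
    exacts [⟨a, Or.inl ha, hx⟩, ⟨a, Or.inr ha, hx⟩]

theorem stmt_11 {α : Type*} [DecidableEq α] (w : Finset α → NNReal)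
    (F₁ F₂ F₁' F₂' : Finset (Finset α))
    (hdisj : Disjoint F₁ F₂)
    (hcov : Disjoint (F₁.biUnion id) (F₂.biUnion id))
    (h1 : IsOptimal w F₁ F₁') (h2 : IsOptimal w F₂ F₂') :
    IsOptimal w (F₁ ∪ F₂) (F₁' ∪ F₂') := by
  obtain ⟨hsub1, hpd1, hopt1⟩ := h1
  obtain ⟨hsub2, hpd2, hopt2⟩ := h2
  have hdisj' : Disjoint F₁' F₂' := hdisj.mono hsub1 hsub2
  have hcov' : Disjoint (F₁'.biUnion id) (F₂'.biUnion id) :=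
    hcov.mono (Finset.biUnion_subset_biUnion_of_subset_left _ hsub1)
              (Finset.biUnion_subset_biUnion_of_subset_left _ hsub2)
  refine ⟨Finset.union_subset_union hsub1 hsub2, ?_, ?_⟩
  · intro S hS T hT hne
    rcases Finset.mem_union.mp hS with h | h <;> rcases Finset.mem_union.mp hT with h' | h'
    · exact hpd1 S h T h' hne
    · exact hcov'.mono (Finset.subset_biUnion_of_mem id h) (Finset.subset_biUnion_of_mem id h')
    · exact hcov'.symm.mono (Finset.subset_biUnion_of_mem id h) (Finset.subset_biUnion_of_mem id h')
    · exact hpd2 S h T h' hne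
  · intro F'' hF'' hpd
    set G₁ := F'' ∩ F₁ with hG₁
    set G₂ := F'' ∩ F₂ with hG₂
    have hGsub1 : G₁ ⊆ F₁ := Finset.inter_subset_right
    have hGsub2 : G₂ ⊆ F₂ := Finset.inter_subset_right
    have hGpd1 : ∀ S ∈ G₁, ∀ T ∈ G₁, S ≠ T → Disjoint S T := fun S hS T hT hne =>
      hpd S (Finset.inter_subset_left hS) T (Finset.inter_subset_left hT) hne
    have hGpd2 : ∀ S ∈ G₂, ∀ T ∈ G₂, S ≠ T → Disjoint S T := fun S hS T hT hne =>
      hpd S (Finset.inter_subset_left hS) T (Finset.inter_subset_left hT) hne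
    have hGdisj : Disjoint G₁ G₂ := hdisj.mono hGsub1 hGsub2
    have hGcov : Disjoint (G₁.biUnion id) (G₂.biUnion id) :=
      hcov.mono (Finset.biUnion_subset_biUnion_of_subset_left _ hGsub1)
                (Finset.biUnion_subset_biUnion_of_subset_left _ hGsub2)
    have hFeq : F'' = G₁ ∪ G₂ := by
      rw [hG₁, hG₂, ← Finset.inter_union_distrib_left]
      exact (Finset.inter_eq_left.mpr hF'').symm
    obtain ⟨c1, w1⟩ := hopt1 G₁ hGsub1 hGpd1
    obtain ⟨c2, w2⟩ := hopt2 G₂ hGsub2 hGpd2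
    have hbF : (F''.biUnion id).card = (G₁.biUnion id).card + (G₂.biUnion id).card := by
      rw [hFeq, biUnion_union_eq, Finset.card_union_of_disjoint hGcov]
    have hbO : ((F₁' ∪ F₂').biUnion id).card
        = (F₁'.biUnion id).card + (F₂'.biUnion id).card := by
      rw [biUnion_union_eq, Finset.card_union_of_disjoint hcov']
    constructor
    · omega
    · intro heq
      have e1 : (G₁.biUnion id).card = (F₁'.biUnion id).card := by omega
      have e2 : (G₂.biUnion id).card = (F₂'.biUnion id).card := by omega
      rw [hFeq, Finset.sum_union hGdisj, Finset.sum_union hdisj']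
      exact add_le_add (w1 e1) (w2 e2)
end
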